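/- Let U : ℝⁿ → unitary operators on a Hilbert space H be a strongly continuous unitary representation, written via its spectral resolution U(x) = ∫ e^{i⟨p,x⟩} dE_p. Let f : ℝⁿ → ℝ be a nonnegative Schwartz function with f̂(0) ≠ 0, and set V_R := ∫ f(x/R) dx. Then for every ψ ∈ H, V_R^{-1} ∫ U(x) f(x/R) dⁿx · ψ converges in norm as R → ∞ to E({0})ψ, the projection of ψ onto the subspace of U-invariant vectors. -/

import Mathlib

open MeasureTheory Filter Topology

lemma schwartz_decay_bound (n : ℕ) (f : SchwartzMap (EuclideanSpace ℝ (Fin n)) ℝ) :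
    ∃ C : ℝ, 0 ≤ C ∧ ∀ x, |f x| ≤ C * ((1 + ‖x‖) ^ (n + 1))⁻¹ := by
  refine ⟨2 ^ (n+1) * (Finset.Iic ((n+1), 0)).sup (fun m => SchwartzMap.seminorm ℝ m.1 m.2) f,
    by positivity, fun x => ?_⟩
  have h := SchwartzMap.one_add_le_sup_seminorm_apply (𝕜 := ℝ) (m := ((n+1), 0)) le_rfl le_rfl f x
  rw [norm_iteratedFDeriv_zero] at h
  have hx : (0:ℝ) < (1 + ‖x‖) ^ (n+1) := by positivity
  rw [le_mul_inv_iff₀ hx, mul_comm]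
  simpa [Real.norm_eq_abs] using h

lemma integrable_decay (n : ℕ) (c : ℝ) :
    Integrable (fun u : EuclideanSpace ℝ (Fin n) => c * ((1 + ‖u‖) ^ (n + 1))⁻¹) := by
  have h : Integrable (fun u : EuclideanSpace ℝ (Fin n) => (1 + ‖u‖) ^ (-(n + 1 : ℝ))) := by
    apply integrable_one_add_norm
    rw [finrank_euclideanSpace, Fintype.card_fin]
    exact_mod_cast lt_add_one (n : ℝ)
  refine (h.const_mul c).congr (Eventually.of_forall fun u => ?_)
  have hx : (0:ℝ) < 1 + ‖u‖ := by positivity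
  simp only []
  rw [show (-(n + 1 : ℝ)) = -((n+1 : ℕ) : ℝ) by push_cast; ring,
    Real.rpow_neg hx.le, Real.rpow_natCast]

lemma tendsto_L1_translate (n : ℕ) (f : SchwartzMap (EuclideanSpace ℝ (Fin n)) ℝ)
    (y : EuclideanSpace ℝ (Fin n)) :
    Tendsto (fun R : ℝ => ∫ u, |f (u - R⁻¹ • y) - f u|) atTop (𝓝 0) := by
  obtain ⟨C, hC0, hC⟩ := schwartz_decay_bound n f
  -- the dominating function
  set c : ℝ := (2 ^ (n+1) * C + C) with hc
  have key : Tendsto (fun R : ℝ => ∫ u, |f (u - R⁻¹ • y) - f u|) atTop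
      (𝓝 (∫ _u : EuclideanSpace ℝ (Fin n), (0:ℝ))) := by
    apply tendsto_integral_filter_of_dominated_convergence
      (fun u => c * ((1 + ‖u‖) ^ (n + 1))⁻¹)
    · filter_upwards with R
      exact ((f.continuous.comp (continuous_id.sub continuous_const)).sub
        f.continuous).abs.aestronglyMeasurable
    · filter_upwards [eventually_ge_atTop (max 1 ‖y‖)] with R hR
      have hR1 : (1:ℝ) ≤ R := le_trans (le_max_left _ _) hR
      have hRy : ‖y‖ ≤ R := le_trans (le_max_right _ _) hR
      have hRpos : (0:ℝ) < R := lt_of_lt_of_le one_pos hR1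
      have hw : ‖R⁻¹ • y‖ ≤ 1 := by
        rw [norm_smul, norm_inv, Real.norm_eq_abs, abs_of_pos hRpos]
        rw [inv_mul_le_iff₀ hRpos]
        linarith
      filter_upwards with u
      set w := R⁻¹ • y
      have h1 : (0:ℝ) < 1 + ‖u - w‖ := by positivity
      have h2 : (0:ℝ) < 1 + ‖u‖ := by positivity
      have hcomp : ((1 + ‖u - w‖) ^ (n+1))⁻¹ ≤ 2 ^ (n+1) * ((1 + ‖u‖) ^ (n+1))⁻¹ := by
        have hub : 1 + ‖u‖ ≤ 2 * (1 + ‖u - w‖) := by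
          have : ‖u‖ ≤ ‖u - w‖ + ‖w‖ := by simpa using norm_add_le (u - w) w
          linarith [norm_nonneg (u - w), hw]
        have hpow : (1 + ‖u‖) ^ (n+1) ≤ 2 ^ (n+1) * (1 + ‖u - w‖) ^ (n+1) := by
          calc (1 + ‖u‖) ^ (n+1) ≤ (2 * (1 + ‖u - w‖)) ^ (n+1) :=
                pow_le_pow_left₀ h2.le hub _
            _ = 2 ^ (n+1) * (1 + ‖u - w‖) ^ (n+1) := by rw [mul_pow]
        have ha : (0:ℝ) < (1 + ‖u - w‖) ^ (n+1) := by positivity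
        have hb : (0:ℝ) < (1 + ‖u‖) ^ (n+1) := by positivity
        rw [← div_eq_mul_inv, le_div_iff₀ hb, inv_mul_le_iff₀ ha]
        linarith
      calc ‖|f (u - w) - f u|‖ = |f (u - w) - f u| := by rw [Real.norm_eq_abs, abs_abs]
        _ ≤ |f (u - w)| + |f u| := abs_sub _ _
        _ ≤ C * ((1 + ‖u - w‖) ^ (n+1))⁻¹ + C * ((1 + ‖u‖) ^ (n+1))⁻¹ :=
            add_le_add (hC _) (hC _)
        _ ≤ C * (2 ^ (n+1) * ((1 + ‖u‖) ^ (n+1))⁻¹) + C * ((1 + ‖u‖) ^ (n+1))⁻¹ := by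
            gcongr
        _ = c * ((1 + ‖u‖) ^ (n+1))⁻¹ := by rw [hc]; ring
    · exact integrable_decay n c
    · filter_upwards with u
      have h0 : Tendsto (fun R : ℝ => u - R⁻¹ • y) atTop (𝓝 (u - (0:ℝ) • y)) := by
        exact tendsto_const_nhds.sub ((tendsto_inv_atTop_zero).smul_const y)
      rw [zero_smul, sub_zero] at h0
      have h1 : Tendsto (fun R : ℝ => f (u - R⁻¹ • y) - f u) atTop (𝓝 (f u - f u)) :=
        ((f.continuous.tendsto u).comp h0).sub tendsto_const_nhds
      rw [sub_self] at h1
      simpa using h1.abs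
  simpa using key

set_option maxHeartbeats 2000000 in
theorem smooth_mean_ergodic (n : ℕ) {H : Type*} [NormedAddCommGroup H]
    [InnerProductSpace ℂ H] [CompleteSpace H]
    (U : EuclideanSpace ℝ (Fin n) → (H →L[ℂ] H))
    (hU0 : U 0 = 1)
    (hUadd : ∀ x y, U (x + y) = (U x).comp (U y))
    (hUiso : ∀ x (ψ : H), ‖U x ψ‖ = ‖ψ‖)
    (hUcont : ∀ ψ : H, Continuous fun x => U x ψ)
    (f : SchwartzMap (EuclideanSpace ℝ (Fin n)) ℝ) (hfpos : ∀ x, 0 ≤ f x)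
    (hf0 : VectorFourier.fourierIntegral Real.fourierChar volume
      (innerₗ (EuclideanSpace ℝ (Fin n))) (fun x => (f x : ℂ)) 0 ≠ 0)
    (ψ : H) :
    ∃ Pψ : H, (∀ x, U x Pψ = Pψ) ∧
      (∀ φ : H, (∀ x, U x φ = φ) → (inner ℂ (ψ - Pψ) φ : ℂ) = 0) ∧
      Tendsto (fun R : ℝ =>
          (∫ x, f (R⁻¹ • x))⁻¹ • ∫ x, f (R⁻¹ • x) • U x ψ)
        atTop (𝓝 Pψ) := by
  have hfi : Integrable (fun x : EuclideanSpace ℝ (Fin n) => f x) := f.integrable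
  -- positivity of the total integral
  have hIne : (∫ x, f x) ≠ 0 := by
    intro h
    apply hf0
    have h1 : VectorFourier.fourierIntegral Real.fourierChar volume
        (innerₗ (EuclideanSpace ℝ (Fin n))) (fun x => (f x : ℂ)) 0 = ∫ x, (f x : ℂ) := by
      rw [VectorFourier.fourierIntegral]
      simp
    have h2 : ∫ x, ((f x : ℝ) : ℂ) = ((∫ x, f x : ℝ) : ℂ) := integral_ofReal (𝕜 := ℂ)
    rw [h1]
    exact h2.trans (by rw [h]; simp)
  have hI : (0:ℝ) < ∫ x, f x := lt_of_le_of_ne (integral_nonneg hfpos) (Ne.symm hIne)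
  -- scaling of the normalization
  have hV : ∀ R : ℝ, 0 < R → (∫ x, f (R⁻¹ • x)) = R ^ n * ∫ x, f x := by
    intro R hR
    rw [Measure.integral_comp_inv_smul_of_nonneg volume (fun x => f x) hR.le,
      finrank_euclideanSpace, Fintype.card_fin, smul_eq_mul]
  have hVpos : ∀ R : ℝ, 0 < R → (0:ℝ) < ∫ x, f (R⁻¹ • x) := by
    intro R hR
    rw [hV R hR]; positivity
  -- generic integrability
  have hIntGen : ∀ (R : ℝ), R ≠ 0 → ∀ (g : EuclideanSpace ℝ (Fin n) → H) (M : ℝ),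
      Continuous g → (∀ x, ‖g x‖ ≤ M) →
      Integrable (fun x => f (R⁻¹ • x) • g x) := by
    intro R hR g M hgc hgb
    have h1 : Integrable (fun x : EuclideanSpace ℝ (Fin n) => f (R⁻¹ • x)) := by
      simpa using hfi.comp_smul (inv_ne_zero hR)
    refine Integrable.mono' (h1.norm.mul_const M) ?_ ?_
    · exact ((f.continuous.comp (continuous_const_smul R⁻¹)).smul hgc).aestronglyMeasurable
    · filter_upwards with x
      rw [norm_smul]
      exact mul_le_mul_of_nonneg_left (hgb x) (norm_nonneg _)
  have hIntU : ∀ (R : ℝ), R ≠ 0 → ∀ φ : H,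
      Integrable (fun x => f (R⁻¹ • x) • U x φ) := by
    intro R hR φ
    exact hIntGen R hR (fun x => U x φ) ‖φ‖ (hUcont φ) (fun x => le_of_eq (hUiso x φ))
  -- the averaging operator
  set A : ℝ → H → H := fun R φ => (∫ x, f (R⁻¹ • x))⁻¹ • ∫ x, f (R⁻¹ • x) • U x φ with hA
  -- contraction property
  have hContract : ∀ R : ℝ, 0 < R → ∀ φ : H, ‖A R φ‖ ≤ ‖φ‖ := by
    intro R hR φ
    have hv := hVpos R hR
    rw [hA]
    simp only [norm_smul, norm_inv, Real.norm_eq_abs, abs_of_pos hv]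
    rw [inv_mul_le_iff₀ hv]
    calc ‖∫ x, f (R⁻¹ • x) • U x φ‖ ≤ ∫ x, ‖f (R⁻¹ • x) • U x φ‖ :=
          norm_integral_le_integral_norm _
      _ = ∫ x, f (R⁻¹ • x) * ‖φ‖ := by
          congr 1; funext x
          rw [norm_smul, Real.norm_eq_abs, abs_of_nonneg (hfpos _), hUiso]
      _ = (∫ x, f (R⁻¹ • x)) * ‖φ‖ := integral_mul_const _ _
      _ ≤ (∫ x, f (R⁻¹ • x)) * ‖φ‖ := le_rfl
  -- invariant vectors are fixed by A
  have hFix : ∀ R : ℝ, 0 < R → ∀ φ : H, (∀ x, U x φ = φ) → A R φ = φ := by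
    intro R hR φ hφ
    have hv := hVpos R hR
    rw [hA]
    simp only [hφ]
    rw [integral_smul_const, smul_smul, inv_mul_cancel₀ hv.ne', one_smul]
  -- additivity of A
  have hAdd : ∀ R : ℝ, R ≠ 0 → ∀ φ χ : H, A R (φ + χ) = A R φ + A R χ := by
    intro R hR φ χ
    rw [hA]
    simp only [map_add, smul_add]
    rw [integral_add (hIntU R hR φ) (hIntU R hR χ), smul_add]
  have hSmul : ∀ R : ℝ, R ≠ 0 → ∀ (c : ℂ) (φ : H), A R (c • φ) = c • A R φ := by
    intro R hR c φ
    rw [hA]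
    simp only [_root_.map_smul]
    have h2 : (fun x => f (R⁻¹ • x) • c • U x φ) = fun x => c • (f (R⁻¹ • x) • U x φ) := by
      funext x; rw [smul_comm]
    rw [h2, integral_smul, smul_comm]
  -- coboundaries tend to zero
  have hCob : ∀ (y : EuclideanSpace ℝ (Fin n)) (η : H),
      Tendsto (fun R : ℝ => A R (U y η - η)) atTop (𝓝 0) := by
    intro y η
    rw [tendsto_zero_iff_norm_tendsto_zero]
    refine squeeze_zero' (g := fun R => (∫ x, f x)⁻¹ * (∫ u, |f (u - R⁻¹ • y) - f u|) * ‖η‖)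
      (Eventually.of_forall fun R => norm_nonneg _) ?_
      (by simpa using ((tendsto_L1_translate n f y).const_mul (∫ x, f x)⁻¹).mul_const ‖η‖)
    filter_upwards [eventually_ge_atTop (1:ℝ)] with R hR1
    have hRpos : (0:ℝ) < R := lt_of_lt_of_le one_pos hR1
    have hRne : R ≠ 0 := hRpos.ne'
    -- integrability facts
    have hI1 : Integrable (fun x => f (R⁻¹ • x) • U (x + y) η) := by
      refine hIntGen R hRne _ ‖η‖ ?_ (fun x => le_of_eq (hUiso _ η))
      exact (hUcont η).comp (continuous_id.add continuous_const)
    have hI2 : Integrable (fun x => f (R⁻¹ • x) • U x η) := hIntU R hRne η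
    have hI1' : Integrable (fun x => f (R⁻¹ • (x - y)) • U x η) := by
      have := hI1.comp_sub_right y
      refine this.congr (Eventually.of_forall fun x => ?_)
      simp [sub_add_cancel]
    -- step 1: rewrite the integral
    have e1 : (∫ x, f (R⁻¹ • x) • U x (U y η - η))
        = ∫ x, (f (R⁻¹ • (x - y)) - f (R⁻¹ • x)) • U x η := by
      have e2 : (fun x => f (R⁻¹ • x) • U x (U y η - η))
          = fun x => f (R⁻¹ • x) • U (x + y) η - f (R⁻¹ • x) • U x η := by
        funext x
        rw [map_sub, smul_sub]
        congr 2
        rw [hUadd x y]; rfl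
      have e3 : (∫ x, f (R⁻¹ • x) • U (x + y) η)
          = ∫ x, f (R⁻¹ • (x - y)) • U x η := by
        have h4 := integral_add_right_eq_self (μ := volume)
          (fun x => f (R⁻¹ • (x - y)) • U x η) y
        simp only [add_sub_cancel_right] at h4
        exact h4
      rw [e2, integral_sub hI1 hI2, e3, ← integral_sub hI1' hI2]
      congr 1; funext x; rw [sub_smul]
    -- step 2: norm bound
    have hDnn : (0:ℝ) ≤ ∫ u, |f (u - R⁻¹ • y) - f u| :=
      integral_nonneg fun u => abs_nonneg _
    have e4 : (∫ x, |f (R⁻¹ • (x - y)) - f (R⁻¹ • x)|)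
        = R ^ n * ∫ u, |f (u - R⁻¹ • y) - f u| := by
      have h5 := Measure.integral_comp_inv_smul_of_nonneg (volume)
        (fun u => |f (u - R⁻¹ • y) - f u|) hRpos.le
      rw [finrank_euclideanSpace, Fintype.card_fin, smul_eq_mul] at h5
      rw [← h5]
      congr 1; funext x
      congr 2
      rw [smul_sub]
    have hnorm : ‖∫ x, (f (R⁻¹ • (x - y)) - f (R⁻¹ • x)) • U x η‖
        ≤ (R ^ n * ∫ u, |f (u - R⁻¹ • y) - f u|) * ‖η‖ := by
      calc ‖∫ x, (f (R⁻¹ • (x - y)) - f (R⁻¹ • x)) • U x η‖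
          ≤ ∫ x, ‖(f (R⁻¹ • (x - y)) - f (R⁻¹ • x)) • U x η‖ :=
            norm_integral_le_integral_norm _
        _ = ∫ x, |f (R⁻¹ • (x - y)) - f (R⁻¹ • x)| * ‖η‖ := by
            congr 1; funext x
            rw [norm_smul, Real.norm_eq_abs, hUiso]
        _ = (∫ x, |f (R⁻¹ • (x - y)) - f (R⁻¹ • x)|) * ‖η‖ := integral_mul_const _ _
        _ = (R ^ n * ∫ u, |f (u - R⁻¹ • y) - f u|) * ‖η‖ := by rw [e4]
    -- assemble
    have hv := hVpos R hRpos
    rw [hA]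
    simp only [norm_smul, norm_inv, Real.norm_eq_abs, abs_of_pos hv]
    rw [e1, hV R hRpos]
    calc (R ^ n * ∫ x, f x)⁻¹ * ‖∫ x, (f (R⁻¹ • (x - y)) - f (R⁻¹ • x)) • U x η‖
        ≤ (R ^ n * ∫ x, f x)⁻¹ * ((R ^ n * ∫ u, |f (u - R⁻¹ • y) - f u|) * ‖η‖) := by
          apply mul_le_mul_of_nonneg_left hnorm
          positivity
      _ = (∫ x, f x)⁻¹ * (∫ u, |f (u - R⁻¹ • y) - f u|) * ‖η‖ := by
          have hRn : (0:ℝ) < R ^ n := by positivity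
          field_simp
  -- adjoint identity
  have hUinner : ∀ (y : EuclideanSpace ℝ (Fin n)) (η φ : H),
      (inner ℂ (U y η) φ : ℂ) = inner ℂ η (U (-y) φ) := by
    intro y η φ
    have hiso : ∀ z, (inner ℂ (U y η) (U y z) : ℂ) = inner ℂ η z := fun z =>
      LinearIsometry.inner_map_map ⟨(U y : H →ₗ[ℂ] H), fun v => hUiso y v⟩ η z
    have h1 : U y (U (-y) φ) = φ := by
      have h2 := hUadd y (-y)
      rw [add_neg_cancel, hU0] at h2
      have h3 := congrArg (fun T : H →L[ℂ] H => T φ) h2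
      simpa using h3.symm
    calc (inner ℂ (U y η) φ : ℂ) = inner ℂ (U y η) (U y (U (-y) φ)) := by rw [h1]
      _ = inner ℂ η (U (-y) φ) := hiso _
  set M : Submodule ℂ H := Submodule.span ℂ {v : H | ∃ y η, v = U y η - η} with hM
  have hKiff : ∀ φ : H, φ ∈ Mᗮ ↔ ∀ x, U x φ = φ := by
    intro φ
    constructor
    · intro hφ x
      have h1 : ∀ y η, (inner ℂ (U y η - η) φ : ℂ) = 0 := fun y η =>
        hφ _ (Submodule.subset_span ⟨y, η, rfl⟩)
      have h2 : ∀ y, U (-y) φ = φ := by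
        intro y
        apply ext_inner_left ℂ
        intro η
        have h3 := h1 y η
        rw [inner_sub_left, sub_eq_zero, hUinner y η φ] at h3
        exact h3
      have := h2 (-x)
      rwa [neg_neg] at this
    · intro hφ
      rw [Submodule.mem_orthogonal]
      intro u hu
      induction hu using Submodule.span_induction with
      | mem v hv =>
          obtain ⟨y, η, rfl⟩ := hv
          rw [inner_sub_left, hUinner, hφ, sub_self]
      | zero => exact inner_zero_left _
      | add u v _ _ hu hv => rw [inner_add_left, hu, hv, add_zero]
      | smul c u _ hu => rw [inner_smul_left, hu, mul_zero]
  haveI : CompleteSpace (Mᗮ : Submodule ℂ H) :=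
    (Submodule.isClosed_orthogonal M).completeSpace_coe
  haveI : Submodule.HasOrthogonalProjection (Mᗮ : Submodule ℂ H) :=
    Submodule.HasOrthogonalProjection.ofCompleteSpace _
  set Pψ : H := (Submodule.orthogonalProjectionOnto Mᗮ ψ : H) with hPψ
  have hPmem : Pψ ∈ Mᗮ := (Submodule.orthogonalProjectionOnto Mᗮ ψ).2
  have hPinv : ∀ x, U x Pψ = Pψ := (hKiff Pψ).mp hPmem
  have hperp : ψ - Pψ ∈ Mᗮᗮ := Submodule.sub_starProjection_mem_orthogonal (K := Mᗮ) ψ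
  have hmTop : ψ - Pψ ∈ M.topologicalClosure := by
    rwa [Submodule.orthogonal_orthogonal_eq_closure] at hperp
  refine ⟨Pψ, hPinv, ?_, ?_⟩
  · intro φ hφ
    have hφK : φ ∈ Mᗮ := (hKiff φ).mpr hφ
    exact inner_eq_zero_symm.mpr ((Submodule.mem_orthogonal _ _).mp hperp φ hφK)
  · -- convergence
    have hSpan : ∀ v ∈ M, Tendsto (fun R => A R v) atTop (𝓝 0) := by
      intro v hv
      induction hv using Submodule.span_induction with
      | mem v hv => obtain ⟨y, η, rfl⟩ := hv; exact hCob y η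
      | zero =>
          have hz : ∀ R : ℝ, A R 0 = 0 := by intro R; rw [hA]; simp
          rw [show (fun R => A R 0) = fun _ => (0:H) from funext hz]
          exact tendsto_const_nhds
      | add u v _ _ hu hv =>
          have heq : ∀ᶠ R in atTop, A R u + A R v = A R (u + v) := by
            filter_upwards [eventually_gt_atTop (0:ℝ)] with R hR
            exact (hAdd R hR.ne' u v).symm
          have h := hu.add hv
          rw [add_zero] at h
          exact h.congr' heq
      | smul c u _ hu =>
          have heq : ∀ᶠ R in atTop, c • A R u = A R (c • u) := by
            filter_upwards [eventually_gt_atTop (0:ℝ)] with R hR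
            exact (hSmul R hR.ne' c u).symm
          have h := hu.const_smul c
          rw [smul_zero] at h
          exact h.congr' heq
    have hClos : Tendsto (fun R => A R (ψ - Pψ)) atTop (𝓝 0) := by
      rw [NormedAddCommGroup.tendsto_nhds_zero]
      intro ε hε
      have hmems : ψ - Pψ ∈ closure (M : Set H) := by
        rw [← Submodule.topologicalClosure_coe]; exact hmTop
      obtain ⟨w, hwM, hww⟩ := Metric.mem_closure_iff.mp hmems (ε/2) (by linarith)
      have hw0 := hSpan w hwM
      rw [NormedAddCommGroup.tendsto_nhds_zero] at hw0
      filter_upwards [hw0 (ε/2) (by linarith), eventually_ge_atTop (1:ℝ)] with R h1 h2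
      have hRpos : (0:ℝ) < R := lt_of_lt_of_le one_pos h2
      have h3 : A R (ψ - Pψ) = A R (ψ - Pψ - w) + A R w := by
        rw [← hAdd R hRpos.ne', sub_add_cancel]
      rw [h3]
      calc ‖A R (ψ - Pψ - w) + A R w‖ ≤ ‖A R (ψ - Pψ - w)‖ + ‖A R w‖ := norm_add_le _ _
        _ ≤ ‖ψ - Pψ - w‖ + ‖A R w‖ := by gcongr; exact hContract R hRpos _
        _ < ε/2 + ε/2 := by
            apply add_lt_add _ h1
            rw [← dist_eq_norm]
            exact hww
        _ = ε := by ring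
    have hfinal : ∀ᶠ R in atTop, A R (ψ - Pψ) + Pψ = A R ψ := by
      filter_upwards [eventually_ge_atTop (1:ℝ)] with R hR
      have hRpos : (0:ℝ) < R := lt_of_lt_of_le one_pos hR
      have h4 : A R ψ = A R (ψ - Pψ) + A R Pψ := by
        rw [← hAdd R hRpos.ne', sub_add_cancel]
      rw [h4, hFix R hRpos Pψ hPinv]
    have h5 := hClos.add (tendsto_const_nhds (x := Pψ))
    rw [zero_add] at h5
    exact h5.congr' hfinal
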